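/- Assume n ≥ 2, c̃_1 ≥ 0, c̃_2 ≥ 0 and 0 ≤ ζ ≤ √2, and for 1 ≤ i ≤ n define r̃_i : ℝ^m × ℝ^m → ℝ by r̃_i(x,y) = n Σ_{l ∈ L_i, 1 ≤ l ≤ m} y_l ⟨b̃_l, x⟩ + (c̃_1/2)‖x‖² − (c̃_2/2)‖y‖² − n x_1 if i = 1, and the same expression without the term −n x_1 if 2 ≤ i ≤ n. Then: (i) each r̃_i is (c̃_1, c̃_2)-convex-concave; (ii) each r̃_i is L-smooth as a function of the joint variable (x,y), with L = √(4n² + 2 max{c̃_1, c̃_2}²); (iii) the family {r̃_i}_{i=1}^n is L'-average smooth with L' = √(8n + 2 max{c̃_1, c̃_2}²). -/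

import Mathlib

open scoped RealInnerProductSpace BigOperators

/-- View a function of two variables `x, y ∈ ℝ^m` as a function of the joint variable
`(x,y)` in the product space with the norm `‖(x,y)‖ = √(‖x‖² + ‖y‖²)`. -/
noncomputable def jointFun {m : ℕ} (f : EuclideanSpace ℝ (Fin m) → EuclideanSpace ℝ (Fin m) → ℝ) :
    WithLp 2 (EuclideanSpace ℝ (Fin m) × EuclideanSpace ℝ (Fin m)) → ℝ :=
  fun z => f ((WithLp.equiv 2 _) z).1 ((WithLp.equiv 2 _) z).2

section Aux

open InnerProductSpace

variable {m : ℕ}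

noncomputable def fstL (m : ℕ) :
    WithLp 2 (EuclideanSpace ℝ (Fin m) × EuclideanSpace ℝ (Fin m)) →L[ℝ] EuclideanSpace ℝ (Fin m) :=
  (ContinuousLinearMap.fst ℝ (EuclideanSpace ℝ (Fin m)) (EuclideanSpace ℝ (Fin m))).comp
    (WithLp.prodContinuousLinearEquiv 2 ℝ (EuclideanSpace ℝ (Fin m)) (EuclideanSpace ℝ (Fin m)) :
      WithLp 2 (EuclideanSpace ℝ (Fin m) × EuclideanSpace ℝ (Fin m)) →L[ℝ] _)

noncomputable def sndL (m : ℕ) :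
    WithLp 2 (EuclideanSpace ℝ (Fin m) × EuclideanSpace ℝ (Fin m)) →L[ℝ] EuclideanSpace ℝ (Fin m) :=
  (ContinuousLinearMap.snd ℝ (EuclideanSpace ℝ (Fin m)) (EuclideanSpace ℝ (Fin m))).comp
    (WithLp.prodContinuousLinearEquiv 2 ℝ (EuclideanSpace ℝ (Fin m)) (EuclideanSpace ℝ (Fin m)) :
      WithLp 2 (EuclideanSpace ℝ (Fin m) × EuclideanSpace ℝ (Fin m)) →L[ℝ] _)

@[simp] lemma fstL_apply (z) : fstL m z = z.fst := rfl
@[simp] lemma sndL_apply (z) : sndL m z = z.snd := rfl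

noncomputable def quadF (S : Finset (Fin m)) (B : Fin m → EuclideanSpace ℝ (Fin m))
    (a : EuclideanSpace ℝ (Fin m)) (ν c₁ c₂ : ℝ) :
    WithLp 2 (EuclideanSpace ℝ (Fin m) × EuclideanSpace ℝ (Fin m)) → ℝ :=
  fun z => ν * ∑ l ∈ S, z.snd l * ⟪B l, z.fst⟫ + c₁ / 2 * ⟪z.fst, z.fst⟫
    - c₂ / 2 * ⟪z.snd, z.snd⟫ - ⟪a, z.fst⟫

noncomputable def quadG (S : Finset (Fin m)) (B : Fin m → EuclideanSpace ℝ (Fin m))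
    (a : EuclideanSpace ℝ (Fin m)) (ν c₁ c₂ : ℝ)
    (z : WithLp 2 (EuclideanSpace ℝ (Fin m) × EuclideanSpace ℝ (Fin m))) :
    WithLp 2 (EuclideanSpace ℝ (Fin m) × EuclideanSpace ℝ (Fin m)) :=
  (WithLp.equiv 2 _).symm
    (ν • ∑ l ∈ S, z.snd l • B l + c₁ • z.fst - a,
     ν • ∑ l ∈ S, ⟪B l, z.fst⟫ • EuclideanSpace.single l (1:ℝ) - c₂ • z.snd)

lemma quad_hasGradientAt (S : Finset (Fin m)) (B : Fin m → EuclideanSpace ℝ (Fin m))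
    (a : EuclideanSpace ℝ (Fin m)) (ν c₁ c₂ : ℝ)
    (z : WithLp 2 (EuclideanSpace ℝ (Fin m) × EuclideanSpace ℝ (Fin m))) :
    HasGradientAt (quadF S B a ν c₁ c₂) (quadG S B a ν c₁ c₂ z) z := by
  have hfst : HasFDerivAt (fun z : WithLp 2 (EuclideanSpace ℝ (Fin m) × EuclideanSpace ℝ (Fin m)) => z.fst)
      (fstL m) z := (fstL m).hasFDerivAt
  have hsnd : HasFDerivAt (fun z : WithLp 2 (EuclideanSpace ℝ (Fin m) × EuclideanSpace ℝ (Fin m)) => z.snd)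
      (sndL m) z := (sndL m).hasFDerivAt
  have hterm : ∀ l ∈ S, HasFDerivAt (fun z : WithLp 2 (EuclideanSpace ℝ (Fin m) × EuclideanSpace ℝ (Fin m)) => z.snd l * ⟪B l, z.fst⟫)
      (z.snd l • ((innerSL ℝ (B l)).comp (fstL m)) + ⟪B l, z.fst⟫ • ((EuclideanSpace.proj l).comp (sndL m))) z := by
    intro l _
    exact HasFDerivAt.mul (((EuclideanSpace.proj l).comp (sndL m)).hasFDerivAt)
      (((innerSL ℝ (B l)).comp (fstL m)).hasFDerivAt)
  have hsum := (HasFDerivAt.sum hterm).const_mul ν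
  have hin1 := (HasFDerivAt.inner ℝ hfst hfst).const_mul (c₁ / 2)
  have hin2 := (HasFDerivAt.inner ℝ hsnd hsnd).const_mul (c₂ / 2)
  have hA : HasFDerivAt (fun z : WithLp 2 (EuclideanSpace ℝ (Fin m) × EuclideanSpace ℝ (Fin m)) => ⟪a, z.fst⟫)
      ((innerSL ℝ a).comp (fstL m)) z := ((innerSL ℝ a).comp (fstL m)).hasFDerivAt
  have hD' := ((hsum.add hin1).sub hin2).sub hA
  rw [hasGradientAt_iff_hasFDerivAt]
  convert hD' using 1
  · rfl
  · rfl
  · funext w; simp [quadF, Finset.sum_apply]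
  ext w
  simp [quadG, quadF, InnerProductSpace.toDual_apply_apply, WithLp.prod_inner_apply,
    fderivInnerCLM_apply, inner_sub_left, inner_add_left, real_inner_smul_left,
    sum_inner, EuclideanSpace.inner_single_left, Finset.mul_sum,
    Finset.sum_add_distrib, real_inner_comm, -PiLp.inner_apply, inner_sum,
    real_inner_smul_right, EuclideanSpace.inner_single_right, mul_comm, mul_left_comm]
  ring

lemma quad_gradient_sub (S : Finset (Fin m)) (B : Fin m → EuclideanSpace ℝ (Fin m))
    (a : EuclideanSpace ℝ (Fin m)) (ν c₁ c₂ : ℝ)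
    (u v : WithLp 2 (EuclideanSpace ℝ (Fin m) × EuclideanSpace ℝ (Fin m))) :
    gradient (quadF S B a ν c₁ c₂) u - gradient (quadF S B a ν c₁ c₂) v
      = quadG S B 0 ν c₁ c₂ (u - v) := by
  rw [(quad_hasGradientAt S B a ν c₁ c₂ u).gradient,
    (quad_hasGradientAt S B a ν c₁ c₂ v).gradient]
  simp only [quadG, WithLp.equiv_symm_apply, ← WithLp.toLp_sub, Prod.mk_sub_mk]
  congr 1
  · have h1 : (u - v).fst = u.fst - v.fst := rfl
    have h2 : (u - v).snd = u.snd - v.snd := rfl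
    rw [h1, h2]
    refine Prod.ext ?_ ?_ <;>
    · simp only [smul_sub, sub_smul, inner_sub_right, Finset.sum_sub_distrib, PiLp.sub_apply,
        sub_zero]
      module

lemma norm_sq_sum_smul (S : Finset (Fin m)) (Bv : Fin m → EuclideanSpace ℝ (Fin m))
    (c : Fin m → ℝ)
    (hOrth : ∀ l ∈ S, ∀ l' ∈ S, l ≠ l' → ⟪Bv l, Bv l'⟫ = 0) :
    ‖∑ l ∈ S, c l • Bv l‖ ^ 2 = ∑ l ∈ S, (c l) ^ 2 * ‖Bv l‖ ^ 2 := by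
  rw [← real_inner_self_eq_norm_sq]
  rw [sum_inner]
  refine Finset.sum_congr rfl fun l hl => ?_
  rw [inner_sum]
  rw [Finset.sum_eq_single_of_mem l hl]
  · rw [real_inner_smul_left, real_inner_smul_right, real_inner_self_eq_norm_sq]; ring
  · intro l' hl' hne
    rw [real_inner_smul_left, real_inner_smul_right, hOrth l hl l' hl' (Ne.symm hne)]
    ring

lemma sum_inner_sq_le (S : Finset (Fin m)) (Bv : Fin m → EuclideanSpace ℝ (Fin m))
    (x : EuclideanSpace ℝ (Fin m))
    (hOrth : ∀ l ∈ S, ∀ l' ∈ S, l ≠ l' → ⟪Bv l, Bv l'⟫ = 0)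
    (hB2 : ∀ l, ‖Bv l‖ ^ 2 ≤ 2) :
    ∑ l ∈ S, ⟪Bv l, x⟫ ^ 2 ≤ 2 * ‖x‖ ^ 2 := by
  set T := ∑ l ∈ S, ⟪Bv l, x⟫ ^ 2 with hT
  have hT0 : 0 ≤ T := Finset.sum_nonneg fun l _ => sq_nonneg _
  have hkey : T = ⟪∑ l ∈ S, ⟪Bv l, x⟫ • Bv l, x⟫ := by
    rw [sum_inner]
    refine Finset.sum_congr rfl fun l hl => ?_
    rw [real_inner_smul_left]; ring
  have hnormsq : ‖∑ l ∈ S, ⟪Bv l, x⟫ • Bv l‖ ^ 2 ≤ 2 * T := by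
    rw [norm_sq_sum_smul S Bv _ hOrth]
    rw [hT, Finset.mul_sum]
    refine Finset.sum_le_sum fun l _ => ?_
    have := hB2 l
    nlinarith [sq_nonneg (⟪Bv l, x⟫ : ℝ)]
  have hcs : T ≤ ‖∑ l ∈ S, ⟪Bv l, x⟫ • Bv l‖ * ‖x‖ := by
    rw [hkey]; exact real_inner_le_norm _ _
  rcases eq_or_lt_of_le hT0 with h0 | h0
  · nlinarith [sq_nonneg ‖x‖]
  · nlinarith [norm_nonneg (∑ l ∈ S, ⟪Bv l, x⟫ • Bv l), norm_nonneg x,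
      sq_nonneg (‖∑ l ∈ S, ⟪Bv l, x⟫ • Bv l‖ - ‖x‖)]

lemma quadG_norm_sq_le (S : Finset (Fin m)) (B : Fin m → EuclideanSpace ℝ (Fin m))
    (ν c₁ c₂ : ℝ)
    (hOrth : ∀ l ∈ S, ∀ l' ∈ S, l ≠ l' → ⟪B l, B l'⟫ = 0)
    (hB2 : ∀ l, ‖B l‖ ^ 2 ≤ 2)
    (w : WithLp 2 (EuclideanSpace ℝ (Fin m) × EuclideanSpace ℝ (Fin m))) :
    ‖quadG S B 0 ν c₁ c₂ w‖ ^ 2 ≤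
      4 * ν ^ 2 * (∑ l ∈ S, (w.snd l) ^ 2) + 2 * c₁ ^ 2 * ‖w.fst‖ ^ 2
        + 2 * ν ^ 2 * (∑ l ∈ S, ⟪B l, w.fst⟫ ^ 2) + 2 * c₂ ^ 2 * ‖w.snd‖ ^ 2 := by
  have hq : ‖quadG S B 0 ν c₁ c₂ w‖ ^ 2
      = ‖ν • ∑ l ∈ S, w.snd l • B l + c₁ • w.fst - 0‖ ^ 2
        + ‖ν • ∑ l ∈ S, ⟪B l, w.fst⟫ • EuclideanSpace.single l (1:ℝ) - c₂ • w.snd‖ ^ 2 := by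
    rw [quadG, WithLp.prod_norm_sq_eq_of_L2]
    rfl
  rw [hq, sub_zero]
  have e1 : ‖∑ l ∈ S, w.snd l • B l‖ ^ 2 ≤ 2 * ∑ l ∈ S, (w.snd l) ^ 2 := by
    rw [norm_sq_sum_smul S B _ hOrth, Finset.mul_sum]
    refine Finset.sum_le_sum fun l _ => ?_
    have := hB2 l
    nlinarith [sq_nonneg (w.snd l)]
  have e2 : ‖∑ l ∈ S, ⟪B l, w.fst⟫ • EuclideanSpace.single l (1:ℝ)‖ ^ 2
      = ∑ l ∈ S, ⟪B l, w.fst⟫ ^ 2 := by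
    rw [norm_sq_sum_smul]
    · refine Finset.sum_congr rfl fun l _ => ?_
      have : ‖EuclideanSpace.single l (1:ℝ)‖ = 1 := by
        simp [EuclideanSpace.norm_single]
      rw [this]; ring
    · intro l hl l' hl' hne
      simp [EuclideanSpace.inner_single_left, EuclideanSpace.single_apply, hne, Ne.symm hne]
  have t1 : ‖ν • ∑ l ∈ S, w.snd l • B l + c₁ • w.fst‖ ^ 2
      ≤ 4 * ν ^ 2 * (∑ l ∈ S, (w.snd l) ^ 2) + 2 * c₁ ^ 2 * ‖w.fst‖ ^ 2 := by
    have htri := norm_add_le (ν • ∑ l ∈ S, w.snd l • B l) (c₁ • w.fst)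
    have h1 : ‖ν • ∑ l ∈ S, w.snd l • B l‖ ^ 2 = ν ^ 2 * ‖∑ l ∈ S, w.snd l • B l‖ ^ 2 := by
      rw [norm_smul]; simp [mul_pow, sq_abs]
    have h2 : ‖c₁ • w.fst‖ ^ 2 = c₁ ^ 2 * ‖w.fst‖ ^ 2 := by
      rw [norm_smul]; simp [mul_pow, sq_abs]
    nlinarith [norm_nonneg (ν • ∑ l ∈ S, w.snd l • B l), norm_nonneg (c₁ • w.fst),
      norm_nonneg (ν • ∑ l ∈ S, w.snd l • B l + c₁ • w.fst),
      sq_nonneg (‖ν • ∑ l ∈ S, w.snd l • B l‖ - ‖c₁ • w.fst‖), sq_nonneg ν, e1]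
  have t2 : ‖ν • ∑ l ∈ S, ⟪B l, w.fst⟫ • EuclideanSpace.single l (1:ℝ) - c₂ • w.snd‖ ^ 2
      ≤ 2 * ν ^ 2 * (∑ l ∈ S, ⟪B l, w.fst⟫ ^ 2) + 2 * c₂ ^ 2 * ‖w.snd‖ ^ 2 := by
    have htri := norm_sub_le (ν • ∑ l ∈ S, ⟪B l, w.fst⟫ • EuclideanSpace.single l (1:ℝ)) (c₂ • w.snd)
    have h1 : ‖ν • ∑ l ∈ S, ⟪B l, w.fst⟫ • EuclideanSpace.single l (1:ℝ)‖ ^ 2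
        = ν ^ 2 * ‖∑ l ∈ S, ⟪B l, w.fst⟫ • EuclideanSpace.single l (1:ℝ)‖ ^ 2 := by
      rw [norm_smul]; simp [mul_pow, sq_abs]
    have h2 : ‖c₂ • w.snd‖ ^ 2 = c₂ ^ 2 * ‖w.snd‖ ^ 2 := by
      rw [norm_smul]; simp [mul_pow, sq_abs]
    nlinarith [norm_nonneg (ν • ∑ l ∈ S, ⟪B l, w.fst⟫ • EuclideanSpace.single l (1:ℝ)),
      norm_nonneg (c₂ • w.snd),
      norm_nonneg (ν • ∑ l ∈ S, ⟪B l, w.fst⟫ • EuclideanSpace.single l (1:ℝ) - c₂ • w.snd),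
      sq_nonneg (‖ν • ∑ l ∈ S, ⟪B l, w.fst⟫ • EuclideanSpace.single l (1:ℝ)‖ - ‖c₂ • w.snd‖)]
  linarith

lemma affine_convex_concave {φ : EuclideanSpace ℝ (Fin m) → ℝ}
    (h : ∀ (p q : ℝ), p + q = 1 → ∀ x y, φ (p • x + q • y) = p * φ x + q * φ y) :
    ConvexOn ℝ Set.univ φ ∧ ConcaveOn ℝ Set.univ φ :=
  ⟨⟨convex_univ, fun x _ y _ p q _ _ hpq => le_of_eq (h p q hpq x y)⟩,
   ⟨convex_univ, fun x _ y _ p q _ _ hpq => le_of_eq (h p q hpq x y).symm⟩⟩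

end Aux

set_option maxHeartbeats 1600000 in
/-- Properties of the bilinear convex–concave decomposition `r̃_i`: each
`r̃_i` is `(c̃₁, c̃₂)`-convex-concave and `√(4n² + 2 max{c̃₁,c̃₂}²)`-smooth in the joint
variable, and the family is `√(8n + 2 max{c̃₁,c̃₂}²)`-average smooth. -/
theorem decomposition_convex_concave_smoothness
    (n m : ℕ) (hn : 2 ≤ n) (hm : 2 ≤ m)
    (ζ c₁ c₂ : ℝ) (hc₁ : 0 ≤ c₁) (hc₂ : 0 ≤ c₂) (hζ : 0 ≤ ζ ∧ ζ ≤ Real.sqrt 2)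
    (b : ℕ → EuclideanSpace ℝ (Fin m))
    (hb0 : b 0 = 0)
    (hbl : ∀ (l : ℕ) (_h1 : 1 ≤ l) (_h2 : l ≤ m - 1),
      b l = EuclideanSpace.single (⟨l - 1, by omega⟩ : Fin m) 1
            - EuclideanSpace.single (⟨l, by omega⟩ : Fin m) 1)
    (hbm : b m = ζ • EuclideanSpace.single (⟨m - 1, by omega⟩ : Fin m) 1)
    (r : ℕ → EuclideanSpace ℝ (Fin m) → EuclideanSpace ℝ (Fin m) → ℝ)
    (hr : ∀ i : ℕ, 1 ≤ i → i ≤ n → ∀ x y,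
      r i x y = (n : ℝ) *
          (∑ l : Fin m,
            if ((l : ℕ) + 1) % n = (i - 1) % n then y l * ⟪b ((l : ℕ) + 1), x⟫ else 0)
        + (c₁ / 2) * ‖x‖ ^ 2 - (c₂ / 2) * ‖y‖ ^ 2
        - (if i = 1 then (n : ℝ) * x ⟨0, by omega⟩ else 0)) :
    (∀ i : ℕ, 1 ≤ i → i ≤ n →
      (∀ y, ConvexOn ℝ Set.univ
        (fun x => r i x y - (c₁ / 2) * ‖x‖ ^ 2 + (c₂ / 2) * ‖y‖ ^ 2)) ∧
      (∀ x, ConcaveOn ℝ Set.univ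
        (fun y => r i x y - (c₁ / 2) * ‖x‖ ^ 2 + (c₂ / 2) * ‖y‖ ^ 2))) ∧
    (∀ i : ℕ, 1 ≤ i → i ≤ n → ∀ u v,
      ‖gradient (jointFun (r i)) u - gradient (jointFun (r i)) v‖
        ≤ Real.sqrt (4 * n ^ 2 + 2 * max c₁ c₂ ^ 2) * ‖u - v‖) ∧
    (∀ u v, (1 / n : ℝ) *
        ∑ i ∈ Finset.Icc 1 n,
          ‖gradient (jointFun (r i)) u - gradient (jointFun (r i)) v‖ ^ 2
      ≤ Real.sqrt (8 * n + 2 * max c₁ c₂ ^ 2) ^ 2 * ‖u - v‖ ^ 2) := by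
  obtain ⟨hζ0, hζ2⟩ := hζ
  have hζsq : ζ ^ 2 ≤ 2 := by
    have h := pow_le_pow_left₀ hζ0 hζ2 2
    rwa [Real.sq_sqrt (by norm_num : (0:ℝ) ≤ 2)] at h
  -- the family of vectors
  set B : Fin m → EuclideanSpace ℝ (Fin m) := fun l => b ((l : ℕ) + 1) with hBdef
  have hBrep : ∀ l : Fin m,
      (∃ h : (l : ℕ) + 1 < m,
        B l = EuclideanSpace.single l 1 - EuclideanSpace.single (⟨(l : ℕ) + 1, h⟩ : Fin m) 1)
      ∨ ((l : ℕ) = m - 1 ∧ B l = ζ • EuclideanSpace.single l 1) := by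
    intro l
    by_cases hl : (l : ℕ) + 1 < m
    · left
      exact ⟨hl, hbl ((l : ℕ) + 1) (by omega) (by omega)⟩
    · right
      have hle : (l : ℕ) = m - 1 := by have := l.isLt; omega
      have h1 : (l : ℕ) + 1 = m := by have := l.isLt; omega
      refine ⟨hle, ?_⟩
      have hidx : (⟨m - 1, by omega⟩ : Fin m) = l := Fin.ext (by simpa using hle.symm)
      show b ((l : ℕ) + 1) = _
      rw [h1, hbm, hidx]
  have hB2 : ∀ l, ‖B l‖ ^ 2 ≤ 2 := by
    intro l
    rcases hBrep l with ⟨h, hrep⟩ | ⟨hle, hrep⟩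
    · rw [hrep, ← real_inner_self_eq_norm_sq]
      have hne : (⟨(l : ℕ) + 1, h⟩ : Fin m) ≠ l := by
        intro hcon
        have := congrArg Fin.val hcon
        simp at this
      simp only [inner_sub_left, inner_sub_right, EuclideanSpace.inner_single_left,
        EuclideanSpace.single_apply, map_one, one_mul]
      norm_num [hne, Ne.symm hne]
    · rw [hrep]
      rw [norm_smul]
      simp only [EuclideanSpace.norm_single, norm_one, mul_one, Real.norm_eq_abs]
      rw [sq_abs]
      exact hζsq
  have hOrthAll : ∀ l l' : Fin m, (l : ℕ) + 2 ≤ (l' : ℕ) → ⟪B l, B l'⟫ = 0 := by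
    intro l l' hll
    have hl1 : (l : ℕ) + 1 < m := by have := l'.isLt; omega
    rcases hBrep l with ⟨h, hrep⟩ | ⟨hle, _⟩
    swap
    · exfalso; have := l'.isLt; omega
    rw [hrep]
    have key : ∀ w : EuclideanSpace ℝ (Fin m),
        w l = 0 → w ⟨(l : ℕ) + 1, h⟩ = 0 →
        ⟪EuclideanSpace.single l 1 - EuclideanSpace.single (⟨(l : ℕ) + 1, h⟩ : Fin m) 1, w⟫ = 0 := by
      intro w h1 h2
      rw [inner_sub_left, EuclideanSpace.inner_single_left, EuclideanSpace.inner_single_left]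
      simp [h1, h2]
    apply key <;>
    · rcases hBrep l' with ⟨h', hrep'⟩ | ⟨hle', hrep'⟩ <;> rw [hrep'] <;>
        simp only [PiLp.sub_apply, PiLp.smul_apply, EuclideanSpace.single_apply, smul_eq_mul] <;>
        rw [if_neg (by intro hc; have := congrArg Fin.val hc; grind)] <;>
        first
          | (rw [if_neg (by intro hc; have := congrArg Fin.val hc; simp at this; omega)]; ring)
          | ring
  have hOrthPair : ∀ l l' : Fin m, l ≠ l' → (l : ℕ) + 2 ≤ (l' : ℕ) ∨ (l' : ℕ) + 2 ≤ (l : ℕ) →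
      ⟪B l, B l'⟫ = 0 := by
    intro l l' _ hor
    rcases hor with h | h
    · exact hOrthAll l l' h
    · rw [real_inner_comm]; exact hOrthAll l' l h
  -- classes
  set Li : ℕ → Finset (Fin m) :=
    fun i => Finset.univ.filter (fun l : Fin m => ((l : ℕ) + 1) % n = (i - 1) % n) with hLi
  have hmodsep : ∀ {a b' : ℕ}, a < b' → (a + 1) % n = (b' + 1) % n → a + 2 ≤ b' := by
    intro a b' hab hmod
    have hd : n ∣ (b' + 1) - (a + 1) := (Nat.modEq_iff_dvd' (by omega)).mp hmod
    have := Nat.le_of_dvd (by omega) hd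
    omega
  have hOrthLi : ∀ i, ∀ l ∈ Li i, ∀ l' ∈ Li i, l ≠ l' → ⟪B l, B l'⟫ = 0 := by
    intro i l hl l' hl' hne
    rw [hLi, Finset.mem_filter] at hl hl'
    have hmm : ((l : ℕ) + 1) % n = ((l' : ℕ) + 1) % n := by rw [hl.2, hl'.2]
    have hvne : (l : ℕ) ≠ (l' : ℕ) := fun h => hne (Fin.ext h)
    rcases Nat.lt_or_ge (l : ℕ) (l' : ℕ) with h | h
    · exact hOrthPair l l' hne (Or.inl (hmodsep h hmm))
    · have hlt : (l' : ℕ) < (l : ℕ) := by omega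
      exact hOrthPair l l' hne (Or.inr (hmodsep hlt hmm.symm))
  -- bound on the full sum of squared inner products (parity splitting)
  have hND : ∀ x : EuclideanSpace ℝ (Fin m), ∑ l : Fin m, ⟪B l, x⟫ ^ 2 ≤ 4 * ‖x‖ ^ 2 := by
    intro x
    have hsplit := Finset.sum_filter_add_sum_filter_not Finset.univ
      (fun l : Fin m => (l : ℕ) % 2 = 0) (fun l => ⟪B l, x⟫ ^ 2)
    have horth : ∀ (p : Fin m → Prop) [DecidablePred p],
        (∀ l l', p l → p l' → (l : ℕ) ≠ (l' : ℕ) → ((l : ℕ) % 2 = (l' : ℕ) % 2)) →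
        ∑ l ∈ Finset.univ.filter p, ⟪B l, x⟫ ^ 2 ≤ 2 * ‖x‖ ^ 2 := by
      intro p _ hp
      apply sum_inner_sq_le _ B x _ hB2
      intro l hl l' hl' hne
      rw [Finset.mem_filter] at hl hl'
      have hvne : (l : ℕ) ≠ (l' : ℕ) := fun h => hne (Fin.ext h)
      have hpar := hp l l' hl.2 hl'.2 hvne
      refine hOrthPair l l' hne ?_
      omega
    have h1 := horth (fun l : Fin m => (l : ℕ) % 2 = 0) (fun l l' hl hl' _ => by omega)
    have h2 := horth (fun l : Fin m => ¬((l : ℕ) % 2 = 0)) (fun l l' hl hl' _ => by omega)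
    linarith
  -- the linear shift vectors
  have h0m : 0 < m := by omega
  set aV : ℕ → EuclideanSpace ℝ (Fin m) :=
    fun i => if i = 1 then (n : ℝ) • EuclideanSpace.single (⟨0, h0m⟩ : Fin m) 1 else 0 with haV
  have haVinner : ∀ i (x : EuclideanSpace ℝ (Fin m)),
      ⟪aV i, x⟫ = if i = 1 then (n : ℝ) * x ⟨0, h0m⟩ else 0 := by
    intro i x
    rw [haV]
    by_cases h : i = 1 <;>
      simp [h, real_inner_smul_left, EuclideanSpace.inner_single_left]
  -- identification with the quadratic model
  have hjoint : ∀ i, 1 ≤ i → i ≤ n → jointFun (r i) = quadF (Li i) B (aV i) n c₁ c₂ := by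
    intro i hi1 hi2
    funext z
    rw [jointFun, hr i hi1 hi2]
    rw [quadF]
    rw [hLi]
    rw [Finset.sum_filter]
    rw [real_inner_self_eq_norm_sq, real_inner_self_eq_norm_sq, haVinner]
    rfl
  -- squared norm of the gradient difference, per class
  have hgrad_sq : ∀ i, 1 ≤ i → i ≤ n → ∀ u v : WithLp 2 (EuclideanSpace ℝ (Fin m) × EuclideanSpace ℝ (Fin m)),
      ‖gradient (jointFun (r i)) u - gradient (jointFun (r i)) v‖ ^ 2 ≤
        4 * (n : ℝ) ^ 2 * (∑ l ∈ Li i, ((u - v).snd l) ^ 2) + 2 * c₁ ^ 2 * ‖(u - v).fst‖ ^ 2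
          + 2 * (n : ℝ) ^ 2 * (∑ l ∈ Li i, ⟪B l, (u - v).fst⟫ ^ 2) + 2 * c₂ ^ 2 * ‖(u - v).snd‖ ^ 2 := by
    intro i hi1 hi2 u v
    rw [hjoint i hi1 hi2, quad_gradient_sub]
    exact quadG_norm_sq_le (Li i) B n c₁ c₂ (hOrthLi i) hB2 (u - v)
  have hmax₁ : c₁ ^ 2 ≤ (max c₁ c₂) ^ 2 := pow_le_pow_left₀ hc₁ (le_max_left _ _) 2
  have hmax₂ : c₂ ^ 2 ≤ (max c₁ c₂) ^ 2 := pow_le_pow_left₀ hc₂ (le_max_right _ _) 2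
  have hnorm_snd : ∀ w : WithLp 2 (EuclideanSpace ℝ (Fin m) × EuclideanSpace ℝ (Fin m)),
      ∀ i, ∑ l ∈ Li i, (w.snd l) ^ 2 ≤ ‖w.snd‖ ^ 2 := by
    intro w i
    have he : ‖w.snd‖ ^ 2 = ∑ l : Fin m, (w.snd l) ^ 2 := by
      rw [PiLp.norm_sq_eq_of_L2]
      exact Finset.sum_congr rfl fun l _ => by rw [Real.norm_eq_abs, sq_abs]
    rw [he]
    exact Finset.sum_le_sum_of_subset_of_nonneg (Finset.subset_univ _)
      (fun l _ _ => sq_nonneg _)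
  have hwsq : ∀ u v : WithLp 2 (EuclideanSpace ℝ (Fin m) × EuclideanSpace ℝ (Fin m)),
      ‖u - v‖ ^ 2 = ‖(u - v).fst‖ ^ 2 + ‖(u - v).snd‖ ^ 2 :=
    fun u v => WithLp.prod_norm_sq_eq_of_L2 _
  have hn2 : (2 : ℝ) ≤ (n : ℝ) := by exact_mod_cast hn
  refine ⟨?_, ?_, ?_⟩
  · -- convexity / concavity
    intro i hi1 hi2
    constructor
    · intro y
      have heq : (fun x => r i x y - (c₁ / 2) * ‖x‖ ^ 2 + (c₂ / 2) * ‖y‖ ^ 2)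
          = fun x : EuclideanSpace ℝ (Fin m) =>
            (n : ℝ) * (∑ l : Fin m,
              if ((l : ℕ) + 1) % n = (i - 1) % n then y l * ⟪B l, x⟫ else 0)
            - (if i = 1 then (n : ℝ) * x ⟨0, by omega⟩ else 0) := by
        funext x
        rw [hr i hi1 hi2]
        ring
      rw [heq]
      refine (affine_convex_concave ?_).1
      intro p q hpq x x'
      have hterm : ∀ l : Fin m,
          (if ((l : ℕ) + 1) % n = (i - 1) % n then y l * ⟪B l, p • x + q • x'⟫ else 0)
          = p * (if ((l : ℕ) + 1) % n = (i - 1) % n then y l * ⟪B l, x⟫ else 0)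
            + q * (if ((l : ℕ) + 1) % n = (i - 1) % n then y l * ⟪B l, x'⟫ else 0) := by
        intro l
        rw [inner_add_right, real_inner_smul_right, real_inner_smul_right]
        split_ifs <;> ring
      rw [Finset.sum_congr rfl (fun l _ => hterm l), Finset.sum_add_distrib,
        ← Finset.mul_sum, ← Finset.mul_sum]
      have happ : (p • x + q • x') (⟨0, by omega⟩ : Fin m)
          = p * x ⟨0, by omega⟩ + q * x' ⟨0, by omega⟩ := rfl
      rw [happ]
      split_ifs <;> ring
    · intro x
      have heq : (fun y => r i x y - (c₁ / 2) * ‖x‖ ^ 2 + (c₂ / 2) * ‖y‖ ^ 2)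
          = fun y : EuclideanSpace ℝ (Fin m) =>
            (n : ℝ) * (∑ l : Fin m,
              if ((l : ℕ) + 1) % n = (i - 1) % n then y l * ⟪B l, x⟫ else 0)
            - (if i = 1 then (n : ℝ) * x ⟨0, by omega⟩ else 0) := by
        funext y
        rw [hr i hi1 hi2]
        ring
      rw [heq]
      refine (affine_convex_concave ?_).2
      intro p q hpq y y'
      have hq1 : q = 1 - p := by linarith
      subst hq1
      have hterm : ∀ l : Fin m,
          (if ((l : ℕ) + 1) % n = (i - 1) % n then (p • y + (1 - p) • y') l * ⟪B l, x⟫ else 0)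
          = p * (if ((l : ℕ) + 1) % n = (i - 1) % n then y l * ⟪B l, x⟫ else 0)
            + (1 - p) * (if ((l : ℕ) + 1) % n = (i - 1) % n then y' l * ⟪B l, x⟫ else 0) := by
        intro l
        have happ : (p • y + (1 - p) • y') l = p * y l + (1 - p) * y' l := rfl
        rw [happ]
        split_ifs <;> ring
      rw [Finset.sum_congr rfl (fun l _ => hterm l), Finset.sum_add_distrib,
        ← Finset.mul_sum, ← Finset.mul_sum]
      split_ifs <;> ring
  · -- individual smoothness
    intro i hi1 hi2 u v
    set w := u - v with hw
    have h1 := hgrad_sq i hi1 hi2 u v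
    have h2 := hnorm_snd w i
    have h3 : ∑ l ∈ Li i, ⟪B l, w.fst⟫ ^ 2 ≤ 2 * ‖w.fst‖ ^ 2 :=
      sum_inner_sq_le (Li i) B w.fst (hOrthLi i) hB2
    have hKnn : (0 : ℝ) ≤ 4 * (n : ℝ) ^ 2 + 2 * max c₁ c₂ ^ 2 := by positivity
    have hsq : ‖gradient (jointFun (r i)) u - gradient (jointFun (r i)) v‖ ^ 2
        ≤ (4 * (n : ℝ) ^ 2 + 2 * max c₁ c₂ ^ 2) * ‖u - v‖ ^ 2 := by
      rw [hwsq u v]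
      nlinarith [sq_nonneg ‖w.fst‖, sq_nonneg ‖w.snd‖, sq_nonneg (n : ℝ)]
    calc ‖gradient (jointFun (r i)) u - gradient (jointFun (r i)) v‖
        = Real.sqrt (‖gradient (jointFun (r i)) u - gradient (jointFun (r i)) v‖ ^ 2) :=
          (Real.sqrt_sq (norm_nonneg _)).symm
      _ ≤ Real.sqrt ((4 * (n : ℝ) ^ 2 + 2 * max c₁ c₂ ^ 2) * ‖u - v‖ ^ 2) :=
          Real.sqrt_le_sqrt hsq
      _ = Real.sqrt (4 * (n : ℝ) ^ 2 + 2 * max c₁ c₂ ^ 2) * ‖u - v‖ := by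
          rw [Real.sqrt_mul hKnn, Real.sqrt_sq (norm_nonneg _)]
  · -- average smoothness
    intro u v
    set w := u - v with hw
    have hpart : ∀ g : Fin m → ℝ,
        ∑ i ∈ Finset.Icc 1 n, ∑ l ∈ Li i, g l = ∑ l : Fin m, g l := by
      intro g
      rw [hLi]
      simp only [Finset.sum_filter]
      rw [Finset.sum_comm]
      refine Finset.sum_congr rfl fun l _ => ?_
      rw [Finset.sum_eq_single (((l : ℕ) + 1) % n + 1)]
      · rw [if_pos]
        have h1 : ((l : ℕ) + 1) % n + 1 - 1 = ((l : ℕ) + 1) % n := by omega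
        rw [h1, Nat.mod_mod_of_dvd _ dvd_rfl]
      · intro i hi hne
        rw [Finset.mem_Icc] at hi
        rw [if_neg]
        intro hcon
        rw [Nat.mod_eq_of_lt (by omega : i - 1 < n)] at hcon
        omega
      · intro hcon
        exfalso
        apply hcon
        rw [Finset.mem_Icc]
        have := Nat.mod_lt ((l : ℕ) + 1) (show 0 < n by omega)
        omega
    have hsum_bound : ∑ i ∈ Finset.Icc 1 n,
        ‖gradient (jointFun (r i)) u - gradient (jointFun (r i)) v‖ ^ 2
        ≤ 4 * (n : ℝ) ^ 2 * ‖w.snd‖ ^ 2 + 2 * (n : ℝ) * c₁ ^ 2 * ‖w.fst‖ ^ 2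
          + 2 * (n : ℝ) ^ 2 * (4 * ‖w.fst‖ ^ 2) + 2 * (n : ℝ) * c₂ ^ 2 * ‖w.snd‖ ^ 2 := by
      have hstep : ∑ i ∈ Finset.Icc 1 n,
          ‖gradient (jointFun (r i)) u - gradient (jointFun (r i)) v‖ ^ 2
          ≤ ∑ i ∈ Finset.Icc 1 n,
            (4 * (n : ℝ) ^ 2 * (∑ l ∈ Li i, (w.snd l) ^ 2) + 2 * c₁ ^ 2 * ‖w.fst‖ ^ 2
              + 2 * (n : ℝ) ^ 2 * (∑ l ∈ Li i, ⟪B l, w.fst⟫ ^ 2) + 2 * c₂ ^ 2 * ‖w.snd‖ ^ 2) := by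
        refine Finset.sum_le_sum fun i hi => ?_
        rw [Finset.mem_Icc] at hi
        exact hgrad_sq i hi.1 hi.2 u v
      have hcard : (Finset.Icc 1 n).card = n := by rw [Nat.card_Icc]; omega
      have hsplit : ∑ i ∈ Finset.Icc 1 n,
          (4 * (n : ℝ) ^ 2 * (∑ l ∈ Li i, (w.snd l) ^ 2) + 2 * c₁ ^ 2 * ‖w.fst‖ ^ 2
            + 2 * (n : ℝ) ^ 2 * (∑ l ∈ Li i, ⟪B l, w.fst⟫ ^ 2) + 2 * c₂ ^ 2 * ‖w.snd‖ ^ 2)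
          = 4 * (n : ℝ) ^ 2 * (∑ i ∈ Finset.Icc 1 n, ∑ l ∈ Li i, (w.snd l) ^ 2)
            + (n : ℝ) * (2 * c₁ ^ 2 * ‖w.fst‖ ^ 2)
            + 2 * (n : ℝ) ^ 2 * (∑ i ∈ Finset.Icc 1 n, ∑ l ∈ Li i, ⟪B l, w.fst⟫ ^ 2)
            + (n : ℝ) * (2 * c₂ ^ 2 * ‖w.snd‖ ^ 2) := by
        simp only [Finset.sum_add_distrib, ← Finset.mul_sum, Finset.sum_const, hcard,
          nsmul_eq_mul]
        push_cast
        ring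
      have hp1 : ∑ i ∈ Finset.Icc 1 n, ∑ l ∈ Li i, (w.snd l) ^ 2 = ∑ l : Fin m, (w.snd l) ^ 2 :=
        hpart _
      have hp2 : ∑ i ∈ Finset.Icc 1 n, ∑ l ∈ Li i, ⟪B l, w.fst⟫ ^ 2
          = ∑ l : Fin m, ⟪B l, w.fst⟫ ^ 2 := hpart _
      have hsnd_eq : ∑ l : Fin m, (w.snd l) ^ 2 = ‖w.snd‖ ^ 2 := by
        rw [PiLp.norm_sq_eq_of_L2]
        exact Finset.sum_congr rfl fun l _ => by rw [Real.norm_eq_abs, sq_abs]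
      have hfst_le := hND w.fst
      calc ∑ i ∈ Finset.Icc 1 n,
          ‖gradient (jointFun (r i)) u - gradient (jointFun (r i)) v‖ ^ 2
          ≤ _ := hstep
        _ = _ := hsplit
        _ ≤ 4 * (n : ℝ) ^ 2 * ‖w.snd‖ ^ 2 + 2 * (n : ℝ) * c₁ ^ 2 * ‖w.fst‖ ^ 2
            + 2 * (n : ℝ) ^ 2 * (4 * ‖w.fst‖ ^ 2) + 2 * (n : ℝ) * c₂ ^ 2 * ‖w.snd‖ ^ 2 := by
          rw [hp1, hp2, hsnd_eq]
          nlinarith [sq_nonneg (n : ℝ)]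
    have hKnn : (0 : ℝ) ≤ 8 * (n : ℝ) + 2 * max c₁ c₂ ^ 2 := by positivity
    rw [Real.sq_sqrt hKnn]
    have hfinal : ∑ i ∈ Finset.Icc 1 n,
        ‖gradient (jointFun (r i)) u - gradient (jointFun (r i)) v‖ ^ 2
        ≤ (n : ℝ) * ((8 * (n : ℝ) + 2 * max c₁ c₂ ^ 2) * ‖u - v‖ ^ 2) := by
      rw [hwsq u v, ← hw]
      have k1 : (0:ℝ) ≤ 2 * (n : ℝ) * ((max c₁ c₂) ^ 2 - c₁ ^ 2) * ‖w.fst‖ ^ 2 := by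
        have := sub_nonneg.mpr hmax₁
        positivity
      have k2 : (0:ℝ) ≤ 2 * (n : ℝ) * ((max c₁ c₂) ^ 2 - c₂ ^ 2) * ‖w.snd‖ ^ 2 := by
        have := sub_nonneg.mpr hmax₂
        positivity
      have k3 : (0:ℝ) ≤ 4 * (n : ℝ) ^ 2 * ‖w.snd‖ ^ 2 := by positivity
      nlinarith [hsum_bound, k1, k2, k3]
    have hnpos : (0 : ℝ) < (n : ℝ) := by positivity
    calc (1 / n : ℝ) * ∑ i ∈ Finset.Icc 1 n,
          ‖gradient (jointFun (r i)) u - gradient (jointFun (r i)) v‖ ^ 2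
        ≤ (1 / n : ℝ) * ((n : ℝ) * ((8 * (n : ℝ) + 2 * max c₁ c₂ ^ 2) * ‖u - v‖ ^ 2)) :=
          mul_le_mul_of_nonneg_left hfinal (by positivity)
      _ = (8 * (n : ℝ) + 2 * max c₁ c₂ ^ 2) * ‖u - v‖ ^ 2 := by
          field_simp
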